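/- Let U ⊆ ℂ × ℂ be open and connected, let h : ℂ × ℂ → ℂ be holomorphic on U, and let Λ ⊆ ℂ be a set with no isolated points, i.e. every x ∈ Λ lies in the closure of Λ \ {x}. Let C ∈ ℂ and suppose the set S = {(z,w) ∈ U : z ∈ Λ and w ∈ Λ} is nonempty and h(z,w) = C for all (z,w) ∈ S. Then h(z,w) = C for all (z,w) ∈ U. (This is step (iii) of the proof of Theorem 4.1: all partial derivatives of h vanish on S, hence h is constant on the connected set U.) -/

import Mathlib

open Metric Set Filter Topology

/-- One-variable identity theorem for the first-coordinate slice of a function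
holomorphic on a polydisc-like set `ball a r ×ˢ T`. -/
private lemma slice_fst_eq_const {h : ℂ × ℂ → ℂ} {C : ℂ} {a : ℂ} {r : ℝ} {T : Set ℂ}
    (hd : DifferentiableOn ℂ h (ball a r ×ˢ T))
    {w : ℂ} (hw : w ∈ T) {z₁ : ℂ} (hz₁ : z₁ ∈ ball a r)
    (hfreq : ∃ᶠ z in 𝓝[≠] z₁, h (z, w) = C) :
    ∀ z ∈ ball a r, h (z, w) = C := by
  have hdiff : DifferentiableOn ℂ (fun z => h (z, w)) (ball a r) :=
    hd.comp (differentiableOn_id.prodMk (differentiableOn_const w))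
      (fun z hz => ⟨hz, hw⟩)
  have han : AnalyticOnNhd ℂ (fun z => h (z, w)) (ball a r) :=
    hdiff.analyticOnNhd isOpen_ball
  exact fun z hz =>
    han.eqOn_of_preconnected_of_frequently_eq (analyticOnNhd_const)
      (convex_ball a r).isPreconnected hz₁ hfreq hz

/-- One-variable identity theorem for the second-coordinate slice. -/
private lemma slice_snd_eq_const {h : ℂ × ℂ → ℂ} {C : ℂ} {b : ℂ} {r : ℝ} {T : Set ℂ}
    (hd : DifferentiableOn ℂ h (T ×ˢ ball b r))
    {z : ℂ} (hz : z ∈ T) {w₁ : ℂ} (hw₁ : w₁ ∈ ball b r)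
    (hfreq : ∃ᶠ w in 𝓝[≠] w₁, h (z, w) = C) :
    ∀ w ∈ ball b r, h (z, w) = C := by
  have hdiff : DifferentiableOn ℂ (fun w => h (z, w)) (ball b r) :=
    hd.comp ((differentiableOn_const z).prodMk differentiableOn_id)
      (fun w hw => ⟨hz, hw⟩)
  have han : AnalyticOnNhd ℂ (fun w => h (z, w)) (ball b r) :=
    hdiff.analyticOnNhd isOpen_ball
  exact fun w hw =>
    han.eqOn_of_preconnected_of_frequently_eq (analyticOnNhd_const)
      (convex_ball b r).isPreconnected hw₁ hfreq hw

/-- Step (iii) of the proof of Theorem 4.1: a holomorphic function on an open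
connected set `U ⊆ ℂ × ℂ` which is constant on the nonempty trace of `Λ × Λ`
on `U`, where `Λ` has no isolated points, is constant on `U`. -/
theorem constant_on_perfect_square_implies_constant
    (U : Set (ℂ × ℂ)) (hUopen : IsOpen U) (hUconn : IsConnected U)
    (h : ℂ × ℂ → ℂ) (hh : DifferentiableOn ℂ h U)
    (Λ : Set ℂ) (hΛperf : ∀ x ∈ Λ, x ∈ closure (Λ \ {x}))
    (C : ℂ)
    (hSne : (U ∩ Λ ×ˢ Λ).Nonempty)
    (hval : ∀ p ∈ U ∩ Λ ×ˢ Λ, h p = C) :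
    ∀ p ∈ U, h p = C := by
  classical
  set A : Set (ℂ × ℂ) := {p | ∀ᶠ q in 𝓝 p, h q = C} with hA
  have hAopen : IsOpen A := isOpen_setOf_eventually_nhds
  -- A point of Λ accumulates via Λ on the punctured neighborhood filter.
  have hacc : ∀ x ∈ Λ, ∃ᶠ y in 𝓝[≠] x, y ∈ Λ := by
    intro x hx
    have := mem_closure_iff_frequently.mp (hΛperf x hx)
    rw [frequently_nhdsWithin_iff]
    exact this.mono (fun y hy => ⟨hy.1, hy.2⟩)
  -- Nonemptiness of U ∩ A.
  have hne : (U ∩ A).Nonempty := by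
    obtain ⟨p₀, hp₀U, hp₀Λ⟩ := hSne
    obtain ⟨r, hr, hball⟩ := Metric.isOpen_iff.mp hUopen p₀ hp₀U
    have hprod : ball p₀.1 r ×ˢ ball p₀.2 r ⊆ U := by
      rw [ball_prod_same]; exact hball
    have hd : DifferentiableOn ℂ h (ball p₀.1 r ×ˢ ball p₀.2 r) := hh.mono hprod
    -- Step 1: for all w ∈ Λ ∩ ball p₀.2 r, slice in z is constant.
    have step1 : ∀ w ∈ Λ ∩ ball p₀.2 r, ∀ z ∈ ball p₀.1 r, h (z, w) = C := by
      rintro w ⟨hwΛ, hwb⟩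
      refine slice_fst_eq_const hd hwb (mem_ball_self hr) ?_
      have hball1 : ∀ᶠ z in 𝓝[≠] p₀.1, z ∈ ball p₀.1 r :=
        eventually_nhdsWithin_of_eventually_nhds
          (isOpen_ball.eventually_mem (mem_ball_self hr))
      refine ((hacc p₀.1 hp₀Λ.1).and_eventually hball1).mono ?_
      rintro z ⟨hzΛ, hzb⟩
      exact hval (z, w) ⟨hprod ⟨hzb, hwb⟩, hzΛ, hwΛ⟩
    -- Step 2: for all z ∈ ball p₀.1 r, the whole second slice is constant.
    have step2 : ∀ z ∈ ball p₀.1 r, ∀ w ∈ ball p₀.2 r, h (z, w) = C := by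
      intro z hz
      refine slice_snd_eq_const (T := ball p₀.1 r) hd hz (mem_ball_self hr) ?_
      have hball2 : ∀ᶠ w in 𝓝[≠] p₀.2, w ∈ ball p₀.2 r :=
        eventually_nhdsWithin_of_eventually_nhds
          (isOpen_ball.eventually_mem (mem_ball_self hr))
      refine ((hacc p₀.2 hp₀Λ.2).and_eventually hball2).mono ?_
      rintro w ⟨hwΛ, hwb⟩
      exact step1 w ⟨hwΛ, hwb⟩ z hz
    refine ⟨p₀, hp₀U, ?_⟩
    have : ∀ᶠ q in 𝓝 p₀, q ∈ ball p₀ r :=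
      isOpen_ball.eventually_mem (mem_ball_self hr)
    refine this.mono (fun q hq => ?_)
    rw [← ball_prod_same] at hq
    exact step2 q.1 hq.1 q.2 hq.2
  -- closure A ∩ U ⊆ A.
  have hclos : closure A ∩ U ⊆ A := by
    rintro p ⟨hpA, hpU⟩
    obtain ⟨r, hr, hball⟩ := Metric.isOpen_iff.mp hUopen p hpU
    have hprod : ball p.1 r ×ˢ ball p.2 r ⊆ U := by
      rw [ball_prod_same]; exact hball
    have hd : DifferentiableOn ℂ h (ball p.1 r ×ˢ ball p.2 r) := hh.mono hprod
    -- find q ∈ A close to p, together with a small ball where h = C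
    obtain ⟨q, hqb, hqA⟩ :=
      mem_closure_iff_nhds.mp hpA (ball p r) (ball_mem_nhds p hr)
    obtain ⟨ε₀, hε₀, hsmall⟩ := Metric.eventually_nhds_iff_ball.mp hqA
    obtain ⟨ε₁, hε₁, hεball⟩ := Metric.isOpen_iff.mp isOpen_ball q hqb
    set ε := min ε₀ ε₁ with hε
    have hεpos : 0 < ε := lt_min hε₀ hε₁
    have hεC : ∀ x ∈ ball q ε, h x = C := fun x hx =>
      hsmall x (ball_subset_ball (min_le_left _ _) hx)
    have hεsub : ball q ε ⊆ ball p r :=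
      (ball_subset_ball (min_le_right _ _)).trans hεball
    have hεsub' : ball q.1 ε ×ˢ ball q.2 ε ⊆ ball p.1 r ×ˢ ball p.2 r := by
      rw [ball_prod_same, ball_prod_same]; exact hεsub
    have hq1 : q.1 ∈ ball p.1 r := (hεsub' ⟨mem_ball_self hεpos, mem_ball_self hεpos⟩).1
    have hq2 : q.2 ∈ ball p.2 r := (hεsub' ⟨mem_ball_self hεpos, mem_ball_self hεpos⟩).2
    -- Step 1: for each w ∈ ball q.2 ε, whole first slice constant.
    have step1 : ∀ w ∈ ball q.2 ε, ∀ z ∈ ball p.1 r, h (z, w) = C := by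
      intro w hw
      have hwb : w ∈ ball p.2 r := (hεsub' (show (q.1, w) ∈ ball q.1 ε ×ˢ ball q.2 ε from ⟨mem_ball_self hεpos, hw⟩)).2
      refine slice_fst_eq_const hd hwb hq1 ?_
      refine Filter.Eventually.frequently ?_
      refine eventually_nhdsWithin_of_eventually_nhds ?_
      have : ∀ᶠ z in 𝓝 q.1, z ∈ ball q.1 ε :=
        isOpen_ball.eventually_mem (mem_ball_self hεpos)
      refine this.mono (fun z hz => ?_)
      have : (z, w) ∈ ball q ε := by
        rw [← ball_prod_same]; exact ⟨hz, hw⟩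
      exact hεC _ this
    -- Step 2: whole polydisc constant.
    have step2 : ∀ z ∈ ball p.1 r, ∀ w ∈ ball p.2 r, h (z, w) = C := by
      intro z hz
      refine slice_snd_eq_const (T := ball p.1 r) hd hz hq2 ?_
      refine Filter.Eventually.frequently ?_
      refine eventually_nhdsWithin_of_eventually_nhds ?_
      have : ∀ᶠ w in 𝓝 q.2, w ∈ ball q.2 ε :=
        isOpen_ball.eventually_mem (mem_ball_self hεpos)
      exact this.mono (fun w hw => step1 w hw z hz)
    have : ∀ᶠ x in 𝓝 p, x ∈ ball p r :=
      isOpen_ball.eventually_mem (mem_ball_self hr)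
    refine this.mono (fun x hx => ?_)
    rw [← ball_prod_same] at hx
    exact step2 x.1 hx.1 x.2 hx.2
  have hsub : U ⊆ A :=
    hUconn.isPreconnected.subset_of_closure_inter_subset hAopen hne hclos
  exact fun p hp => (hsub hp).self_of_nhds
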